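/- Let G be a complex m×n matrix with ‖G v‖ ≥ γ₀ ‖v‖ for all v (γ₀ > 0), set A = Gᴴ G, K = A⁻¹ Gᴴ, P = G A⁻¹ Gᴴ, and fix η with 0 < η < γ₀ and 2(1 − η) − η/γ₀² > 0. Let b ∈ ℂⁿ, w(t) = exp(t M)(b, 0) with blocks (r(t), s(t)), and define E(t) = ‖r(t)‖² + ‖s(t)‖² − 2η Re⟨r(t), K s(t)⟩. Then E is differentiable at every t and its derivative satisfies E′(t) ≤ −η ‖r(t)‖² − (2(1 − η) − η/γ₀²) ‖P s(t)‖² − 2 ‖s(t) − P s(t)‖². -/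

import Mathlib

open scoped Matrix ComplexInnerProductSpace
open Filter MeasureTheory

noncomputable section

/-- `ℂ^k` with the ℓ² norm. -/
abbrev Evec (k : ℕ) : Type := EuclideanSpace ℂ (Fin k)

/-- The joint space `ℂⁿ ⊕ ℂᵐ` with the ℓ² norm. -/
abbrev Jvec (n m : ℕ) : Type := EuclideanSpace ℂ (Fin n ⊕ Fin m)

/-- A complex matrix viewed as a continuous linear map between Euclidean spaces,
so that `‖matCLM A‖` is the induced ℓ² operator norm. -/
noncomputable def matCLM {α β : Type*} [Fintype α] [Fintype β] [DecidableEq β]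
    (A : Matrix α β ℂ) : EuclideanSpace ℂ β →L[ℂ] EuclideanSpace ℂ α :=
  LinearMap.toContinuousLinearMap (Matrix.toEuclideanLin A)

/-- The block matrix `M = [[0, -Gᴴ], [G, -I]]` on `ℂⁿ ⊕ ℂᵐ`. -/
def blockM {m n : ℕ} (G : Matrix (Fin m) (Fin n) ℂ) :
    Matrix (Fin n ⊕ Fin m) (Fin n ⊕ Fin m) ℂ :=
  Matrix.fromBlocks 0 (-Gᴴ) G (-1)

/-- The matrix exponential `exp (t M)` as a continuous linear map on `ℂⁿ ⊕ ℂᵐ`. -/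
noncomputable def expM {m n : ℕ} (G : Matrix (Fin m) (Fin n) ℂ) (t : ℝ) :
    Jvec n m →L[ℂ] Jvec n m :=
  NormedSpace.exp (t • matCLM (blockM G))

/-- Join two blocks into a joint vector. -/
def joinV {n m : ℕ} (r : Evec n) (s : Evec m) : Jvec n m :=
  (WithLp.equiv 2 _).symm (Sum.elim ((WithLp.equiv 2 _) r) ((WithLp.equiv 2 _) s))

/-- First (residual `r`) block of a joint vector. -/
def rblock {n m : ℕ} (w : Jvec n m) : Evec n :=
  (WithLp.equiv 2 _).symm fun i => w (Sum.inl i)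

/-- Second (residual `s`) block of a joint vector. -/
def sblock {n m : ℕ} (w : Jvec n m) : Evec m :=
  (WithLp.equiv 2 _).symm fun j => w (Sum.inr j)

/-- Residual dynamics `w(t) = exp (t M) (b, 0)`. -/
noncomputable def wdyn {m n : ℕ} (G : Matrix (Fin m) (Fin n) ℂ) (b : Evec n) (t : ℝ) :
    Jvec n m :=
  expM G t (joinV b 0)

/-- Accumulator `x(t) = ∫₀ᵗ r(τ) dτ`. -/
noncomputable def xacc {m n : ℕ} (G : Matrix (Fin m) (Fin n) ℂ) (b : Evec n) (t : ℝ) :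
    Evec n :=
  ∫ τ in (0:ℝ)..t, rblock (wdyn G b τ)

/-! ### Auxiliary lemmas -/

section Aux

set_option linter.unusedSectionVars false

variable {α β γ : Type*} [Fintype α] [Fintype β] [Fintype γ]
  [DecidableEq α] [DecidableEq β] [DecidableEq γ]

lemma matCLM_mul (A : Matrix α β ℂ) (B : Matrix β γ ℂ) (v : EuclideanSpace ℂ γ) :
    matCLM (A * B) v = matCLM A (matCLM B v) := by
  simp [matCLM, Matrix.toEuclideanLin_apply, Matrix.mulVec_mulVec]

lemma matCLM_one (v : EuclideanSpace ℂ β) : matCLM (1 : Matrix β β ℂ) v = v := by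
  simp [matCLM, Matrix.toEuclideanLin_apply]

lemma inner_matCLM_left (A : Matrix α β ℂ) (u : EuclideanSpace ℂ β) (v : EuclideanSpace ℂ α) :
    ⟪matCLM A u, v⟫ = ⟪u, matCLM Aᴴ v⟫ := by
  show ⟪Matrix.toEuclideanLin A u, v⟫ = ⟪u, Matrix.toEuclideanLin Aᴴ v⟫
  rw [Matrix.toEuclideanLin_conjTranspose_eq_adjoint, LinearMap.adjoint_inner_right]

lemma re_inner_comm {ι : Type*} [Fintype ι] (x y : EuclideanSpace ℂ ι) :
    (⟪x, y⟫ : ℂ).re = (⟪y, x⟫ : ℂ).re := by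
  rw [← inner_conj_symm x y, Complex.conj_re]

lemma re_inner_self' {ι : Type*} [Fintype ι] (x : EuclideanSpace ℂ ι) :
    (⟪x, x⟫ : ℂ).re = ‖x‖ ^ 2 := by
  rw [← RCLike.re_to_complex]
  exact inner_self_eq_norm_sq x

lemma lyap_arith (γ₀ η x a ns nk np ri : ℝ) (hγ : 0 < γ₀) (hη0 : 0 < η)
    (ha : 0 ≤ a) (hnk : 0 ≤ nk) (hri : ri ≤ a * nk) (hKsb : γ₀ * nk ≤ np) :
    -(2 * x) + (2 * x - 2 * ns ^ 2) - 2 * η * (a ^ 2 - ri - np ^ 2)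
      ≤ -η * a ^ 2 - (2 * (1 - η) - η / γ₀ ^ 2) * np ^ 2 - 2 * (ns ^ 2 - np ^ 2) := by
  have hnp : 0 ≤ np := le_trans (mul_nonneg hγ.le hnk) hKsb
  have hdiv : η * nk ^ 2 ≤ η / γ₀ ^ 2 * np ^ 2 := by
    rw [div_mul_eq_mul_div, le_div_iff₀ (by positivity)]
    nlinarith [mul_le_mul hKsb hKsb (mul_nonneg hγ.le hnk) hnp, hη0.le]
  nlinarith [mul_le_mul_of_nonneg_left hri (by linarith : (0:ℝ) ≤ 2 * η), hdiv,
    mul_le_mul_of_nonneg_left (sq_nonneg (a - nk)) hη0.le]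

end Aux

section Blocks

variable {m n : ℕ} (G : Matrix (Fin m) (Fin n) ℂ)

/-- `rblock` as a continuous linear map. -/
def rCLM (n m : ℕ) : Jvec n m →L[ℂ] Evec n :=
  LinearMap.toContinuousLinearMap
    { toFun := rblock
      map_add' := fun _ _ => rfl
      map_smul' := fun _ _ => rfl }

/-- `sblock` as a continuous linear map. -/
def sCLM (n m : ℕ) : Jvec n m →L[ℂ] Evec m :=
  LinearMap.toContinuousLinearMap
    { toFun := sblock
      map_add' := fun _ _ => rfl
      map_smul' := fun _ _ => rfl }

lemma rblock_blockM (w : Jvec n m) :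
    rblock (matCLM (blockM G) w) = -(matCLM Gᴴ (sblock w)) := by
  ext i
  simp [rblock, sblock, blockM, matCLM, Matrix.toEuclideanLin_apply, Matrix.mulVec,
    dotProduct, Equiv.refl_apply, Matrix.of_apply, Sum.elim_inl, Sum.elim_inr,
    Matrix.neg_apply, Matrix.zero_apply, Fintype.sum_sum_type, PiLp.toLp_apply,
    WithLp.equiv_apply]

lemma sblock_blockM (w : Jvec n m) :
    sblock (matCLM (blockM G) w) = matCLM G (rblock w) - sblock w := by
  ext j
  simp [rblock, sblock, blockM, matCLM, Matrix.toEuclideanLin_apply, Matrix.mulVec,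
    dotProduct, Equiv.refl_apply, Matrix.of_apply, Sum.elim_inl, Sum.elim_inr,
    Matrix.neg_apply, Matrix.zero_apply, Fintype.sum_sum_type, PiLp.toLp_apply,
    WithLp.equiv_apply, Matrix.one_apply, apply_ite, mul_comm, sub_eq_add_neg]

lemma HasDerivAt.comp_ofReal'' {E : Type*} [NormedAddCommGroup E] [NormedSpace ℂ E]
    {f : ℂ → E} {f' : E} {z : ℝ} (hf : HasDerivAt f f' (z : ℂ)) :
    HasDerivAt (fun t : ℝ => f (t : ℂ)) f' z := by
  have h := (hf.hasFDerivAt.restrictScalars ℝ).comp_hasDerivAt z Complex.ofRealCLM.hasDerivAt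
  simpa [Function.comp_def] using h

lemma hasDerivAt_wdyn (b : Evec n) (t : ℝ) :
    HasDerivAt (wdyn G b) (matCLM (blockM G) (wdyn G b t)) t := by
  set Mc := matCLM (blockM G) with hMc
  have h1 : HasDerivAt (fun u : ℂ => NormedSpace.exp (u • Mc))
      (Mc * NormedSpace.exp ((t : ℂ) • Mc)) (t : ℂ) :=
    hasDerivAt_exp_smul_const' Mc (t : ℂ)
  have h2 := h1.comp_ofReal''
  have hEq : (fun τ : ℝ => NormedSpace.exp ((τ : ℂ) • Mc)) = fun τ : ℝ => expM G τ := by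
    funext τ
    rw [expM, ← hMc]
    norm_cast
  rw [hEq] at h2
  have h3 := ((ContinuousLinearMap.apply ℂ (Jvec n m) (joinV b 0)).restrictScalars
      ℝ).hasFDerivAt.comp_hasDerivAt t h2
  have h5 : HasDerivAt (wdyn G b) ((Mc * NormedSpace.exp ((t:ℂ) • Mc)) (joinV b 0)) t := h3
  have h6 : (Mc * NormedSpace.exp ((t:ℂ) • Mc)) (joinV b 0) = Mc (wdyn G b t) := by
    rw [ContinuousLinearMap.mul_apply]
    norm_cast
  rwa [h6] at h5

end Blocks

theorem stmt8_lyapunov_derivative_bound {m n : ℕ} (hm : 0 < m) (hn : 0 < n)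
    (γ₀ η : ℝ) (hγ : 0 < γ₀) (hη0 : 0 < η) (hη : η < γ₀)
    (hη2 : 0 < 2 * (1 - η) - η / γ₀ ^ 2)
    (G : Matrix (Fin m) (Fin n) ℂ)
    (hG : ∀ v : Evec n, γ₀ * ‖v‖ ≤ ‖matCLM G v‖) (b : Evec n) :
    ∀ t : ℝ, ∃ d : ℝ,
      HasDerivAt
        (fun τ : ℝ => ‖rblock (wdyn G b τ)‖ ^ 2 + ‖sblock (wdyn G b τ)‖ ^ 2
          - 2 * η * (⟪rblock (wdyn G b τ), matCLM ((Gᴴ * G)⁻¹ * Gᴴ) (sblock (wdyn G b τ))⟫).re) d t ∧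
      d ≤ -η * ‖rblock (wdyn G b t)‖ ^ 2
          - (2 * (1 - η) - η / γ₀ ^ 2) * ‖matCLM (G * (Gᴴ * G)⁻¹ * Gᴴ) (sblock (wdyn G b t))‖ ^ 2
          - 2 * ‖sblock (wdyn G b t) - matCLM (G * (Gᴴ * G)⁻¹ * Gᴴ) (sblock (wdyn G b t))‖ ^ 2 := by
  intro t
  -- Notation
  set A : Matrix (Fin n) (Fin n) ℂ := Gᴴ * G with hA
  set K : Matrix (Fin n) (Fin m) ℂ := A⁻¹ * Gᴴ with hK
  set P : Matrix (Fin m) (Fin m) ℂ := G * A⁻¹ * Gᴴ with hP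
  -- G is injective
  have hGzero : ∀ v : Evec n, matCLM G v = 0 → v = 0 := by
    intro v hv
    have h := hG v
    rw [hv, norm_zero] at h
    have : ‖v‖ = 0 := le_antisymm (by nlinarith [norm_nonneg v]) (norm_nonneg v)
    simpa using this
  -- A is invertible
  have hUnit : IsUnit A := by
    rw [← Matrix.mulVec_injective_iff_isUnit]
    have hinj : Function.Injective (matCLM A) := by
      have : ∀ v : Evec n, matCLM A v = 0 → v = 0 := by
        intro v hv
        apply hGzero
        have h0 : (⟪matCLM G v, matCLM G v⟫ : ℂ) = 0 := by
          rw [inner_matCLM_left, ← matCLM_mul, ← hA, hv, inner_zero_right]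
        exact inner_self_eq_zero.mp h0
      intro u v huv
      have := this (u - v) (by rw [map_sub, huv, sub_self])
      linear_combination (norm := module) this
    intro x y hxy
    have h1 : matCLM A ((WithLp.equiv 2 _).symm x) = matCLM A ((WithLp.equiv 2 _).symm y) := by
      show (WithLp.equiv 2 _).symm (A *ᵥ x) = (WithLp.equiv 2 _).symm (A *ᵥ y)
      rw [hxy]
    have := hinj h1
    simpa using congrArg (WithLp.equiv 2 _) this
  have hdet : IsUnit A.det := (Matrix.isUnit_iff_isUnit_det A).mp hUnit
  have hInv1 : A⁻¹ * A = 1 := Matrix.nonsing_inv_mul A hdet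
  have hInv2 : A * A⁻¹ = 1 := Matrix.mul_nonsing_inv A hdet
  -- key matrix identities
  have hKG : ∀ v : Evec n, matCLM K (matCLM G v) = v := by
    intro v
    rw [← matCLM_mul, hK, Matrix.mul_assoc, ← hA, hInv1, matCLM_one]
  have hGK : ∀ v : Evec m, matCLM G (matCLM K v) = matCLM P v := by
    intro v
    rw [← matCLM_mul, hK, hP, Matrix.mul_assoc]
  have hAH : Aᴴ = A := by rw [hA, Matrix.conjTranspose_mul, Matrix.conjTranspose_conjTranspose]
  have hPH : Pᴴ = P := by
    rw [hP, Matrix.conjTranspose_mul, Matrix.conjTranspose_mul,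
      Matrix.conjTranspose_conjTranspose, Matrix.conjTranspose_nonsing_inv, hAH,
      Matrix.mul_assoc]
  have hPP : P * P = P := by
    have h1 : P * P = G * ((A⁻¹ * A) * (A⁻¹ * Gᴴ)) := by
      rw [hP]
      simp only [hA, Matrix.mul_assoc]
    rw [h1, hInv1, Matrix.one_mul, hP, Matrix.mul_assoc]
  -- derivative of the dynamics
  have hw := hasDerivAt_wdyn G b t
  set w' : Jvec n m := matCLM (blockM G) (wdyn G b t) with hw'def
  -- abbreviations for the current state
  set r : Evec n := rblock (wdyn G b t) with hrdef
  set s : Evec m := sblock (wdyn G b t) with hsdef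
  have hr'val : rblock w' = -(matCLM Gᴴ s) := rblock_blockM G _
  have hs'val : sblock w' = matCLM G r - s := sblock_blockM G _
  -- derivatives of the blocks
  have hr : HasDerivAt (fun τ => rblock (wdyn G b τ)) (rblock w') t :=
    ((rCLM n m).restrictScalars ℝ).hasFDerivAt.comp_hasDerivAt t hw
  have hs : HasDerivAt (fun τ => sblock (wdyn G b τ)) (sblock w') t :=
    ((sCLM n m).restrictScalars ℝ).hasFDerivAt.comp_hasDerivAt t hw
  have hKs : HasDerivAt (fun τ => matCLM K (sblock (wdyn G b τ))) (matCLM K (sblock w')) t :=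
    ((matCLM K).restrictScalars ℝ).hasFDerivAt.comp_hasDerivAt t hs
  -- derivative of the three scalar terms
  have hrr := (hr.inner ℂ hr)
  have hss := (hs.inner ℂ hs)
  have hrKs := (hr.inner ℂ hKs)
  have hrrRe := Complex.reCLM.hasFDerivAt.comp_hasDerivAt t hrr
  have hssRe := Complex.reCLM.hasFDerivAt.comp_hasDerivAt t hss
  have hrKsRe := Complex.reCLM.hasFDerivAt.comp_hasDerivAt t hrKs
  have hE := (hrrRe.add hssRe).sub (hrKsRe.const_mul (2 * η))
  -- the function in the statement equals the function we differentiated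
  have hfun : (fun τ : ℝ => ‖rblock (wdyn G b τ)‖ ^ 2 + ‖sblock (wdyn G b τ)‖ ^ 2
          - 2 * η * (⟪rblock (wdyn G b τ), matCLM K (sblock (wdyn G b τ))⟫).re)
      = fun τ : ℝ => (⟪rblock (wdyn G b τ), rblock (wdyn G b τ)⟫).re
          + (⟪sblock (wdyn G b τ), sblock (wdyn G b τ)⟫).re
          - 2 * η * (⟪rblock (wdyn G b τ), matCLM K (sblock (wdyn G b τ))⟫).re := by
    funext τ
    rw [re_inner_self', re_inner_self']
  have hEmain : HasDerivAt
      (fun τ : ℝ => ‖rblock (wdyn G b τ)‖ ^ 2 + ‖sblock (wdyn G b τ)‖ ^ 2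
          - 2 * η * (⟪rblock (wdyn G b τ), matCLM K (sblock (wdyn G b τ))⟫).re) _ t :=
    hE.congr_of_eventuallyEq (Filter.Eventually.of_forall fun τ => by
      simp only [Pi.sub_apply, Pi.add_apply, Function.comp_apply, Complex.reCLM_apply, re_inner_self'])
  refine ⟨_, hEmain, ?_⟩
  -- now the bound
  clear hE hEmain hrr hss hrKs hrrRe hssRe hrKsRe hr hs hKs hw hfun
  simp only [Complex.reCLM_apply, ← hrdef, ← hsdef]
  have E1 : (⟪r, rblock w'⟫ + ⟪rblock w', r⟫).re = -(2 * (⟪matCLM G r, s⟫ : ℂ).re) := by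
    rw [Complex.add_re, re_inner_comm (rblock w') r, hr'val, inner_neg_right, ← inner_matCLM_left,
      Complex.neg_re]
    ring
  have E2 : (⟪s, sblock w'⟫ + ⟪sblock w', s⟫).re
      = 2 * (⟪matCLM G r, s⟫ : ℂ).re - 2 * ‖s‖ ^ 2 := by
    rw [Complex.add_re, re_inner_comm (sblock w') s, hs'val, inner_sub_right, Complex.sub_re,
      re_inner_comm s (matCLM G r), re_inner_self']
    ring
  have hsPs : (⟪s, matCLM P s⟫ : ℂ).re = ‖matCLM P s‖ ^ 2 := by
    have hiden : (⟪matCLM P s, matCLM P s⟫ : ℂ) = ⟪s, matCLM P s⟫ := by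
      rw [inner_matCLM_left, hPH, ← matCLM_mul, hPP]
    rw [← hiden, re_inner_self']
  have E3 : (⟪r, matCLM K (sblock w')⟫ + ⟪rblock w', matCLM K s⟫).re
      = ‖r‖ ^ 2 - (⟪r, matCLM K s⟫ : ℂ).re - ‖matCLM P s‖ ^ 2 := by
    rw [hs'val, hr'val, map_sub, inner_sub_right, hKG r, inner_neg_left,
      inner_matCLM_left Gᴴ s (matCLM K s), Matrix.conjTranspose_conjTranspose, hGK s,
      Complex.add_re, Complex.sub_re, Complex.neg_re, re_inner_self', hsPs]
    ring
  rw [E1, E2, E3]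
  have hsplit : ‖s - matCLM P s‖ ^ 2 = ‖s‖ ^ 2 - ‖matCLM P s‖ ^ 2 := by
    have h := norm_sub_sq (𝕜 := ℂ) s (matCLM P s)
    rw [RCLike.re_to_complex, hsPs] at h
    linarith
  have hcs : (⟪r, matCLM K s⟫ : ℂ).re ≤ ‖r‖ * ‖matCLM K s‖ := by
    have h := re_inner_le_norm (𝕜 := ℂ) r (matCLM K s)
    rwa [RCLike.re_to_complex] at h
  have hKsb : γ₀ * ‖matCLM K s‖ ≤ ‖matCLM P s‖ := by
    have h := hG (matCLM K s)
    rwa [hGK] at h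
  rw [hsplit]
  exact lyap_arith γ₀ η _ ‖r‖ ‖s‖ ‖matCLM K s‖ ‖matCLM P s‖ _ hγ hη0 (norm_nonneg _)
    (norm_nonneg _) hcs hKsb
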